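/- Shrinking the bin width preserves feasibility: let W̄ be the maximum value not exceeding W that is expressible as a sum of a subset of the item widths. Then a set of items can be feasibly packed into a bin of width W and height H if and only if it can be feasibly packed into a bin of width W̄ and height H. -/

import Mathlib

open Finset

open scoped Classical in
/-- Left-compaction of a packing. -/
noncomputable def compactX {ι : Type*} [Fintype ι] (w h x y : ι → ℕ) (i : ι) : ℕ :=
  ((univ.filter fun j => x j < x i ∧ x j + w j ≤ x i ∧
      ¬(y i + h i ≤ y j) ∧ ¬(y j + h j ≤ y i)).attach).sup
    (fun j => compactX w h x y j.1 + w j.1)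
termination_by x i
decreasing_by
  have hj := j.2
  simp only [Finset.mem_filter] at hj
  exact hj.2.1

open scoped Classical in
lemma compactX_ge {ι : Type*} [Fintype ι] (w h x y : ι → ℕ) {i j : ι}
    (h1 : x j < x i) (h2 : x j + w j ≤ x i)
    (h3 : ¬(y i + h i ≤ y j)) (h4 : ¬(y j + h j ≤ y i)) :
    compactX w h x y j + w j ≤ compactX w h x y i := by
  have hmem : j ∈ univ.filter fun j => x j < x i ∧ x j + w j ≤ x i ∧
      ¬(y i + h i ≤ y j) ∧ ¬(y j + h j ≤ y i) :=
    Finset.mem_filter.mpr ⟨Finset.mem_univ _, h1, h2, h3, h4⟩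
  conv_rhs => rw [compactX]
  exact Finset.le_sup (f := fun k => compactX w h x y k.1 + w k.1) (Finset.mem_attach _ ⟨j, hmem⟩)

lemma compactX_le_x {ι : Type*} [Fintype ι] (w h x y : ι → ℕ) :
    ∀ n i, x i ≤ n → compactX w h x y i ≤ x i := by
  intro n
  induction n with
  | zero =>
    intro i hi
    rw [compactX]
    apply Finset.sup_le
    rintro ⟨j, hj⟩ _
    simp only [Finset.mem_filter] at hj
    omega
  | succ n ih =>
    intro i hi
    rw [compactX]
    apply Finset.sup_le
    rintro ⟨j, hj⟩ _
    simp only [Finset.mem_filter] at hj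
    have := ih j (by omega)
    show compactX w h x y j + w j ≤ x i
    omega

lemma compactX_sum {ι : Type*} [Fintype ι] (w h x y : ι → ℕ) (hw : ∀ i, 0 < w i) :
    ∀ n i, x i ≤ n → ∃ S : Finset ι, ∑ j ∈ S, w j = compactX w h x y i + w i ∧
      ∀ j ∈ S, x j + w j ≤ x i + w i := by
  classical
  intro n
  induction n with
  | zero =>
    intro i hi
    refine ⟨{i}, ?_, ?_⟩
    · have h0 : compactX w h x y i = 0 := Nat.le_zero.mp ((compactX_le_x w h x y 0 i hi).trans hi)
      simp [h0]
    · intro j hj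
      simp only [Finset.mem_singleton] at hj
      subst hj; exact le_rfl
  | succ n ih =>
    intro i hi
    by_cases hc : compactX w h x y i = 0
    · exact ⟨{i}, by simp [hc], by intro j hj; simp only [Finset.mem_singleton] at hj; subst hj; exact le_rfl⟩
    · -- the sup is attained at some j0
      rw [compactX] at hc
      have hne : ((univ.filter fun j => x j < x i ∧ x j + w j ≤ x i ∧
          ¬(y i + h i ≤ y j) ∧ ¬(y j + h j ≤ y i)).attach).Nonempty := by
        by_contra hemp
        rw [Finset.not_nonempty_iff_eq_empty] at hemp
        rw [hemp] at hc
        simp at hc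
      obtain ⟨j0, _, hj0eq⟩ := Finset.exists_mem_eq_sup _ hne
        (fun j => compactX w h x y j.1 + w j.1)
      have hj0 := j0.2
      simp only [Finset.mem_filter] at hj0
      obtain ⟨-, h1, h2, h3, h4⟩ := hj0
      have hcomp : compactX w h x y i = compactX w h x y j0.1 + w j0.1 := by
        rw [compactX]; exact hj0eq
      obtain ⟨S0, hS0sum, hS0bd⟩ := ih j0.1 (by omega)
      have hiS0 : i ∉ S0 := by
        intro hmem
        have := hS0bd i hmem
        have := hw i
        omega
      refine ⟨insert i S0, ?_, ?_⟩
      · rw [Finset.sum_insert hiS0, hS0sum, hcomp]; ring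
      · intro j hj
        rcases Finset.mem_insert.mp hj with rfl | hj
        · exact le_rfl
        · have := hS0bd j hj; omega

/-- Feasibility of packing a set of items into a `W × H` bin. -/
def feasiblePack {ι : Type*} [Fintype ι] (w h : ι → ℕ) (W H : ℕ) : Prop :=
  ∃ x y : ι → ℕ, (∀ i, x i + w i ≤ W ∧ y i + h i ≤ H) ∧
    ∀ i j, i ≠ j →
      x i + w i ≤ x j ∨ x j + w j ≤ x i ∨ y i + h i ≤ y j ∨ y j + h j ≤ y i

/-- Shrinking the bin width to the largest subset sum `W'` of item widths not exceeding
`W` preserves feasibility. -/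
theorem stmt_3 {ι : Type*} [Fintype ι] (w h : ι → ℕ) (W W' H : ℕ)
    (hw : ∀ i, 0 < w i ∧ w i ≤ W) (hh : ∀ i, 0 < h i ∧ h i ≤ H)
    (hW' : W' ≤ W)
    (hsum : ∃ S : Finset ι, ∑ i ∈ S, w i = W')
    (hmaxi : ∀ S : Finset ι, ∑ i ∈ S, w i ≤ W → ∑ i ∈ S, w i ≤ W') :
    feasiblePack w h W H ↔ feasiblePack w h W' H := by
  constructor
  · rintro ⟨x, y, hbd, hsep⟩
    refine ⟨compactX w h x y, y, fun i => ⟨?_, (hbd i).2⟩, ?_⟩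
    · obtain ⟨S, hSsum, hSbd⟩ := compactX_sum w h x y (fun i => (hw i).1) (x i) i le_rfl
      have hle : compactX w h x y i ≤ x i := compactX_le_x w h x y (x i) i le_rfl
      have hSW : ∑ j ∈ S, w j ≤ W := by
        rw [hSsum]
        have := (hbd i).1
        omega
      have := hmaxi S hSW
      omega
    · intro i j hij
      by_cases hy : y i + h i ≤ y j ∨ y j + h j ≤ y i
      · tauto
      · rw [not_or] at hy
        rcases hsep i j hij with hx1 | hx2 | hy1 | hy2
        · left
          exact compactX_ge w h x y (by have := (hw i).1; omega) hx1 hy.2 hy.1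
        · right; left
          exact compactX_ge w h x y (by have := (hw j).1; omega) hx2 hy.1 hy.2
        · omega
        · omega
  · rintro ⟨x, y, hbd, hsep⟩
    exact ⟨x, y, fun i => ⟨(hbd i).1.trans hW', (hbd i).2⟩, hsep⟩
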